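/- arXiv:2210.00677 — 4 statements merged into one kernel-verified Lean document; each statement's English description precedes it below -/
import Mathlib

section
/- Lemma (exit-time bound under downward acceleration). Let g > 0, τ ≥ 0, t ∈ ℝ, and let X₃ : [t−τ, t] → ℝ be twice differentiable with X₃''(s) ≤ −g/2 for all s ∈ [t−τ, t]. Set x₃ := X₃(t), v₃ := X₃'(t), v_b := X₃'(t−τ), and assume x₃ ≥ 0 and X₃(t−τ) = 0. Then v_b² ≥ g x₃ and τ ≤ (2/g) · min{ √(v₃² + g x₃) − v₃ , √(v_b² − g x₃) + v_b }. -/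
/-!
Statement 6 (Lemma 4.1(i)): exit-time bound under downward acceleration.
-/

private lemma exit_aux_le_of_deriv_nonneg {a b : ℝ} (hab : a ≤ b) (f f' : ℝ → ℝ)
    (hf : ∀ s ∈ Set.Icc a b, HasDerivWithinAt f (f' s) (Set.Icc a b) s)
    (h0 : ∀ s ∈ Set.Icc a b, 0 ≤ f' s) : f a ≤ f b := by
  have hm : MonotoneOn f (Set.Icc a b) :=
    monotoneOn_of_hasDerivWithinAt_nonneg (convex_Icc a b)
      (fun s hs => (hf s hs).continuousWithinAt)
      (fun s hs => (hf s (interior_subset hs)).mono interior_subset)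
      (fun s hs => h0 s (interior_subset hs))
  exact hm (Set.left_mem_Icc.2 hab) (Set.right_mem_Icc.2 hab) hab

/-- **Exit-time bound under downward acceleration.**  If the vertical component `X₃`
of a trajectory has acceleration `≤ −g/2` on `[t−τ, t]`, ends at height `x₃ = X₃(t) ≥ 0`,
and exits through the boundary (`X₃(t−τ) = 0`), then `v_b² ≥ g x₃` and
`τ ≤ (2/g) min{√(v₃² + g x₃) − v₃, √(v_b² − g x₃) + v_b}`. -/
theorem exit_time_bound
    (g τ t : ℝ) (hg : 0 < g) (hτ : 0 ≤ τ)
    (X X' X'' : ℝ → ℝ)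
    (hX : ∀ s ∈ Set.Icc (t - τ) t, HasDerivWithinAt X (X' s) (Set.Icc (t - τ) t) s)
    (hX' : ∀ s ∈ Set.Icc (t - τ) t, HasDerivWithinAt X' (X'' s) (Set.Icc (t - τ) t) s)
    (hacc : ∀ s ∈ Set.Icc (t - τ) t, X'' s ≤ -g / 2)
    (hx3 : 0 ≤ X t) (hexit : X (t - τ) = 0) :
    g * X t ≤ (X' (t - τ)) ^ 2 ∧
      τ ≤ 2 / g * min (Real.sqrt ((X' t) ^ 2 + g * X t) - X' t)
            (Real.sqrt ((X' (t - τ)) ^ 2 - g * X t) + X' (t - τ)) := by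
  set a := t - τ with ha_def
  have ha : a ≤ t := by simp [ha_def]; linarith
  set v3 := X' t with hv3
  set vb := X' a with hvb
  set x3 := X t with hx3def
  -- the function s ↦ X' s + (g/2) s is antitone
  have hanti : AntitoneOn (fun s => X' s + g / 2 * s) (Set.Icc a t) := by
    apply antitoneOn_of_hasDerivWithinAt_nonpos (f' := fun s => X'' s + g / 2) (convex_Icc a t)
    · intro s hs
      have h := (hX' s hs).add ((hasDerivWithinAt_id s (Set.Icc a t)).const_mul (g / 2))
      have h' : HasDerivWithinAt (fun s => X' s + g / 2 * s) (X'' s + g / 2) (Set.Icc a t) s := by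
        refine h.congr_deriv ?_; simp
      exact h'.continuousWithinAt
    · intro s hs
      have h := (hX' s (interior_subset hs)).add
        ((hasDerivWithinAt_id s (Set.Icc a t)).const_mul (g / 2))
      have h' : HasDerivWithinAt (fun s => X' s + g / 2 * s) (X'' s + g / 2) (Set.Icc a t) s := by
        refine h.congr_deriv ?_; simp
      exact h'.mono interior_subset
    · intro s hs
      have := hacc s (interior_subset hs)
      linarith
  have hmemt : t ∈ Set.Icc a t := Set.right_mem_Icc.2 ha
  have hmema : a ∈ Set.Icc a t := Set.left_mem_Icc.2 ha
  have hlow : ∀ s ∈ Set.Icc a t, v3 + g / 2 * (t - s) ≤ X' s := by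
    intro s hs
    have := hanti hs hmemt hs.2
    simp only at this
    nlinarith [this]
  have hup : ∀ s ∈ Set.Icc a t, X' s ≤ vb - g / 2 * (s - a) := by
    intro s hs
    have := hanti hmema hs hs.1
    simp only at this
    nlinarith [this]
  -- lower bound: x3 ≥ v3 τ + (g/4) τ²
  have hA : v3 * τ + g / 4 * τ ^ 2 ≤ x3 := by
    have hF : ∀ s ∈ Set.Icc a t,
        HasDerivWithinAt (fun s => X s - v3 * s + g / 4 * (t - s) ^ 2)
          (X' s - v3 - g / 2 * (t - s)) (Set.Icc a t) s := by
      intro s hs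
      have h := ((hX s hs).sub ((hasDerivWithinAt_id s (Set.Icc a t)).const_mul v3)).add
        ((((hasDerivWithinAt_id s (Set.Icc a t)).const_sub t).pow 2).const_mul (g / 4))
      refine h.congr_deriv ?_
      simp; ring
    have h0 : ∀ s ∈ Set.Icc a t, 0 ≤ X' s - v3 - g / 2 * (t - s) := by
      intro s hs; have := hlow s hs; linarith
    have := exit_aux_le_of_deriv_nonneg ha _ _ hF h0
    simp only [hexit, ha_def] at this
    nlinarith [this]
  -- upper bound: x3 ≤ vb τ - (g/4) τ²
  have hB : x3 ≤ vb * τ - g / 4 * τ ^ 2 := by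
    have hG : ∀ s ∈ Set.Icc a t,
        HasDerivWithinAt (fun s => -(X s) + vb * s - g / 4 * (s - a) ^ 2)
          (-(X' s) + vb - g / 2 * (s - a)) (Set.Icc a t) s := by
      intro s hs
      have h := (((hX s hs).neg).add ((hasDerivWithinAt_id s (Set.Icc a t)).const_mul vb)).sub
        ((((hasDerivWithinAt_id s (Set.Icc a t)).sub_const a).pow 2).const_mul (g / 4))
      refine h.congr_deriv ?_
      simp; ring
    have h0 : ∀ s ∈ Set.Icc a t, 0 ≤ -(X' s) + vb - g / 2 * (s - a) := by
      intro s hs; have := hup s hs; linarith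
    have := exit_aux_le_of_deriv_nonneg ha _ _ hG h0
    simp only [hexit, ha_def] at this
    nlinarith [this]
  have part1 : g * x3 ≤ vb ^ 2 := by
    nlinarith [sq_nonneg (vb - g * τ / 2), mul_le_mul_of_nonneg_left hB hg.le]
  rw [mul_min_of_nonneg _ _ (by positivity : (0:ℝ) ≤ 2 / g)]
  refine ⟨part1, le_min ?_ ?_⟩
  · set S := Real.sqrt (v3 ^ 2 + g * x3) with hS
    have hrad : 0 ≤ v3 ^ 2 + g * x3 := by nlinarith [sq_nonneg v3, mul_nonneg hg.le hx3]
    have hS0 : 0 ≤ S := Real.sqrt_nonneg _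
    have hSsq : S ^ 2 = v3 ^ 2 + g * x3 := Real.sq_sqrt hrad
    have hy : g * τ / 2 + v3 ≤ S := by
      nlinarith [mul_le_mul_of_nonneg_left hA hg.le, hS0, hSsq]
    rw [div_mul_eq_mul_div, le_div_iff₀ hg]
    linarith
  · set T := Real.sqrt (vb ^ 2 - g * x3) with hT
    have hrad : 0 ≤ vb ^ 2 - g * x3 := by linarith
    have hT0 : 0 ≤ T := Real.sqrt_nonneg _
    have hTsq : T ^ 2 = vb ^ 2 - g * x3 := Real.sq_sqrt hrad
    have hy : g * τ / 2 - vb ≤ T := by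
      nlinarith [mul_le_mul_of_nonneg_left hB hg.le, hT0, hTsq]
    rw [div_mul_eq_mul_div, le_div_iff₀ hg]
    linarith
end

section
/- Lemma (two-sided Gronwall bounds for the kinetic distance). Let g > 0 and let Φ : ℝ² × [0,∞) → ℝ be C² with ‖∇ₓΦ‖_{L∞} ≤ g/2. Define the kinetic distance α(x,v) := √( v₃² + x₃² + 2 ∂_{x₃}Φ(x∥, 0) x₃ + 2 g x₃ ) for x = (x∥, x₃) with x₃ ≥ 0 and v ∈ ℝ³. Let (X, V) : [−τ, 0] → (ℝ²×[0,∞)) × ℝ³ solve X' = V, V' = −∇ₓΦ(X) − g e₃ with (X(0), V(0)) = (x, v). Then for every t ∈ [−τ, 0]: α(X(t), V(t)) ≤ α(x,v) · exp( (1 + ‖∂_{x₃}²Φ‖_{L∞}) |t| ) · exp( (1/g) ‖∇_{x∥} ∂_{x₃}Φ‖_{L∞(x₃=0)} ∫_t^0 |V∥(s)| ds ), and α(X(t), V(t)) ≥ α(x,v) · exp( −(1 + ‖∂_{x₃}²Φ‖_{L∞}) |t| ) · exp( −(1/g) ‖∇_{x∥} ∂_{x₃}Φ‖_{L∞(x₃=0)}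 ∫_t^0 |V∥(s)| ds ). -/
/-!
Statement 8 (Lemma 3.2): two-sided Gronwall bounds for the kinetic distance
along the steady characteristics.
-/

open MeasureTheory Real Set

noncomputable section

abbrev V3 : Type := Fin 3 → ℝ

/-- Partial derivative of a scalar function in the `i`-th coordinate direction. -/
def pd (i : Fin 3) (f : V3 → ℝ) (x : V3) : ℝ := fderiv ℝ f x (Pi.single i 1)

/-- Euclidean norm of the gradient. -/
def gradNorm (f : V3 → ℝ) (x : V3) : ℝ := Real.sqrt (∑ i, (pd i f x) ^ 2)

lemma clm_apply_eq_sum (L : V3 →L[ℝ] ℝ) (w : V3) :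
    L w = w 0 * L (Pi.single 0 1) + w 1 * L (Pi.single 1 1) + w 2 * L (Pi.single 2 1) := by
  have hw : w = w 0 • (Pi.single 0 1 : V3) + w 1 • (Pi.single 1 1 : V3) + w 2 • (Pi.single 2 1 : V3) := by
    funext j
    fin_cases j <;> simp [Pi.single_apply]
  conv_lhs => rw [hw]
  simp [smul_eq_mul]

lemma abs_cs2 (a b c d : ℝ) : |a*c + b*d| ≤ Real.sqrt (a^2+b^2) * Real.sqrt (c^2+d^2) := by
  have h : (a*c + b*d)^2 ≤ (a^2+b^2) * (c^2+d^2) := by nlinarith [sq_nonneg (a*d - b*c)]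
  have := Real.sqrt_le_sqrt h
  rwa [Real.sqrt_sq_eq_abs, Real.sqrt_mul (by positivity)] at this

lemma pd_le_gradNorm (f : V3 → ℝ) (x : V3) (i : Fin 3) : |pd i f x| ≤ gradNorm f x := by
  rw [← Real.sqrt_sq_eq_abs]
  exact Real.sqrt_le_sqrt (Finset.single_le_sum (f := fun j => (pd j f x)^2)
    (fun j _ => sq_nonneg _) (Finset.mem_univ i))

/-- The kinetic distance `α(x,v) = √(v₃² + x₃² + 2∂_{x₃}Φ(x∥,0)x₃ + 2g x₃)`. -/
def alphaK (g : ℝ) (Φ : V3 → ℝ) (x v : V3) : ℝ :=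
  Real.sqrt ((v 2) ^ 2 + (x 2) ^ 2 + 2 * pd 2 Φ ![x 0, x 1, 0] * x 2 + 2 * g * x 2)

/-- **Two-sided Gronwall bounds for the kinetic distance** along characteristics
`X' = V`, `V' = −∇ₓΦ(X) − g e₃` staying in the half-space `{x₃ ≥ 0}`. -/
theorem kinetic_distance_two_sided
    (g : ℝ) (hg : 0 < g) (Φ : V3 → ℝ) (hΦ : ContDiff ℝ 2 Φ)
    -- ‖∇ₓΦ‖_{L∞} ≤ g/2
    (hgrad : ∀ x : V3, 0 ≤ x 2 → gradNorm Φ x ≤ g / 2)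
    -- ‖∂²_{x₃}Φ‖_{L∞} ≤ C33 and ‖∇_{x∥}∂_{x₃}Φ‖_{L∞(x₃=0)} ≤ Cmix
    (C33 Cmix : ℝ)
    (hC33 : ∀ x : V3, 0 ≤ x 2 → |pd 2 (fun y => pd 2 Φ y) x| ≤ C33)
    (hCmix : ∀ x : V3, x 2 = 0 →
      Real.sqrt ((pd 0 (fun y => pd 2 Φ y) x) ^ 2 + (pd 1 (fun y => pd 2 Φ y) x) ^ 2) ≤ Cmix)
    (τ : ℝ) (hτ : 0 ≤ τ)
    (x v : V3) (hx : 0 ≤ x 2)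
    (X V : ℝ → V3) (hX0 : X 0 = x) (hV0 : V 0 = v)
    (hode : ∀ s ∈ Set.Icc (-τ) (0:ℝ),
      HasDerivAt X (V s) s ∧
      HasDerivAt V (fun i => -(pd i Φ (X s)) - (if i = 2 then g else 0)) s ∧
      0 ≤ X s 2) :
    ∀ t ∈ Set.Icc (-τ) (0:ℝ),
      alphaK g Φ (X t) (V t)
          ≤ alphaK g Φ x v * Real.exp ((1 + C33) * |t|)
              * Real.exp ((1 / g) * Cmix
                  * ∫ s in t..0, Real.sqrt ((V s 0) ^ 2 + (V s 1) ^ 2)) ∧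
      alphaK g Φ x v * Real.exp (-((1 + C33) * |t|))
              * Real.exp (-((1 / g) * Cmix
                  * ∫ s in t..0, Real.sqrt ((V s 0) ^ 2 + (V s 1) ^ 2)))
          ≤ alphaK g Φ (X t) (V t) := by
  classical
  -- the third partial derivative of Φ as a C¹ function
  set ψ : V3 → ℝ := fun y => pd 2 Φ y with hψdef
  have hψ : ContDiff ℝ 1 ψ := by
    have h1 : ContDiff ℝ 1 (fderiv ℝ Φ) := hΦ.fderiv_right (by norm_num)
    simpa [hψdef, pd] using h1.clm_apply contDiff_const
  have hψdiff : Differentiable ℝ ψ := hψ.differentiable one_ne_zero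
  -- the boundary curve and the squared kinetic distance
  set c : ℝ → V3 := fun s => ![X s 0, X s 1, 0] with hcdef
  have hc2 : ∀ s, c s 2 = 0 := by intro s; simp [hcdef]
  set β : ℝ → ℝ := fun s => (V s 2)^2 + (X s 2)^2 + 2 * ψ (c s) * X s 2 + 2*g*(X s 2)
    with hβdef
  have halpha : ∀ s, alphaK g Φ (X s) (V s) = Real.sqrt (β s) := by
    intro s; rfl
  set nV : ℝ → ℝ := fun s => Real.sqrt ((V s 0)^2 + (V s 1)^2) with hnVdef
  have hnV0 : ∀ s, 0 ≤ nV s := fun s => Real.sqrt_nonneg _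
  set fc : ℝ → ℝ := fun s => 2*(1+C33) + (2*Cmix/g) * nV s with hfcdef
  set β' : ℝ → ℝ := fun s => 2*(V s 2)*(ψ (c s) - ψ (X s)) + 2*(X s 2)*(V s 2)
      + 2*(V s 0 * pd 0 ψ (c s) + V s 1 * pd 1 ψ (c s))*(X s 2) with hβ'def
  have hC330 : 0 ≤ C33 := le_trans (abs_nonneg _) (hC33 ![0,0,0] (by simp))
  have hCmix0 : 0 ≤ Cmix := le_trans (Real.sqrt_nonneg _) (hCmix ![0,0,0] (by simp))
  -- coercivity: β dominates v₃² + x₃² + g x₃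
  have hcoerc : ∀ s ∈ Set.Icc (-τ) (0:ℝ),
      (V s 2)^2 + (X s 2)^2 + g * X s 2 ≤ β s := by
    intro s hs
    have hXs2 : 0 ≤ X s 2 := (hode s hs).2.2
    have h1 : |ψ (c s)| ≤ g / 2 :=
      le_trans (pd_le_gradNorm Φ (c s) 2) (hgrad (c s) (le_of_eq (hc2 s).symm))
    have h2 : -(g/2) ≤ ψ (c s) := neg_le_of_abs_le h1
    have : -(g) * X s 2 ≤ 2 * ψ (c s) * X s 2 := by nlinarith
    simp only [hβdef]; nlinarith
  have hβnonneg : ∀ s ∈ Set.Icc (-τ) (0:ℝ), 0 ≤ β s := by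
    intro s hs
    have hXs2 : 0 ≤ X s 2 := (hode s hs).2.2
    nlinarith [hcoerc s hs, sq_nonneg (V s 2), sq_nonneg (X s 2)]
  -- derivative of β
  have hβd : ∀ s ∈ Set.Icc (-τ) (0:ℝ), HasDerivAt β (β' s) s := by
    intro s hs
    obtain ⟨hXd, hVd, hXs2⟩ := hode s hs
    have hX2 : HasDerivAt (fun u => X u 2) (V s 2) s := hasDerivAt_pi.1 hXd 2
    have hX0' : HasDerivAt (fun u => X u 0) (V s 0) s := hasDerivAt_pi.1 hXd 0
    have hX1' : HasDerivAt (fun u => X u 1) (V s 1) s := hasDerivAt_pi.1 hXd 1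
    have hV2 : HasDerivAt (fun u => V u 2) (-(ψ (X s)) - g) s := by
      have := hasDerivAt_pi.1 hVd 2
      simpa [hψdef] using this
    have hcd : HasDerivAt c (![V s 0, V s 1, 0]) s := by
      apply hasDerivAt_pi.2
      intro i
      fin_cases i
      · simpa [hcdef] using hX0'
      · simpa [hcdef] using hX1'
      · simpa [hcdef] using hasDerivAt_const s (0:ℝ)
    have hψc : HasDerivAt (fun u => ψ (c u))
        (V s 0 * pd 0 ψ (c s) + V s 1 * pd 1 ψ (c s)) s := by
      have h1 : HasDerivAt (ψ ∘ c) (fderiv ℝ ψ (c s) (![V s 0, V s 1, 0])) s :=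
        (hψdiff (c s)).hasFDerivAt.comp_hasDerivAt s hcd
      have h2 : fderiv ℝ ψ (c s) (![V s 0, V s 1, 0])
          = V s 0 * pd 0 ψ (c s) + V s 1 * pd 1 ψ (c s) := by
        rw [clm_apply_eq_sum]
        simp [pd]
      rw [h2] at h1
      exact h1
    have h := (((hV2.pow 2).add (hX2.pow 2)).add
        (((hψc.const_mul 2).mul hX2))).add (hX2.const_mul (2*g))
    convert h using 1
    case e'_9 =>
      show 2*(V s 2)*(ψ (c s) - ψ (X s)) + 2*(X s 2)*(V s 2)
          + 2*(V s 0 * pd 0 ψ (c s) + V s 1 * pd 1 ψ (c s))*(X s 2) = _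
      push_cast; ring
    all_goals rfl
  -- pointwise bound |β'| ≤ fc * β
  have hβ'bound : ∀ s ∈ Set.Icc (-τ) (0:ℝ), |β' s| ≤ fc s * β s := by
    intro s hs
    have hXs2 : 0 ≤ X s 2 := (hode s hs).2.2
    -- MVT bound on |ψ (c s) - ψ (X s)|
    have hMVT : |ψ (c s) - ψ (X s)| ≤ C33 * X s 2 := by
      set a : ℝ := X s 2 with hadef
      set γ : ℝ → ℝ := fun θ => ψ (c s + θ • (Pi.single 2 a : V3)) with hγdef
      set γ' : ℝ → ℝ := fun θ => a * pd 2 ψ (c s + θ • (Pi.single 2 a : V3)) with hγ'def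
      have hγd : ∀ θ : ℝ, HasDerivAt γ (γ' θ) θ := by
        intro θ
        have hline : HasDerivAt (fun θ : ℝ => c s + θ • (Pi.single 2 a : V3))
            ((Pi.single 2 a : V3)) θ := by
          simpa using ((hasDerivAt_id θ).smul_const (Pi.single 2 a : V3)).const_add (c s)
        have h1 : HasDerivAt γ
            (fderiv ℝ ψ (c s + θ • (Pi.single 2 a : V3)) (Pi.single 2 a : V3)) θ :=
          (hψdiff _).hasFDerivAt.comp_hasDerivAt θ hline
        have h2 : (fderiv ℝ ψ (c s + θ • (Pi.single 2 a : V3))) (Pi.single 2 a : V3)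
            = γ' θ := by
          rw [clm_apply_eq_sum]
          simp only [hγ'def, pd, Pi.single_apply]
          norm_num [Fin.ext_iff]
        rwa [h2] at h1
      have hend : c s + (1:ℝ) • (Pi.single 2 a : V3) = X s := by
        funext j; fin_cases j <;> simp [hcdef, hadef, Pi.single_apply]
      obtain ⟨θ, hθ, hslope⟩ := exists_hasDerivAt_eq_slope γ γ' (by norm_num : (0:ℝ) < 1)
        (fun u _ => (hγd u).continuousAt.continuousWithinAt) (fun u _ => hγd u)
      have hγ1 : γ 1 = ψ (X s) := by rw [hγdef]; simp only; rw [hend]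
      have hγ0 : γ 0 = ψ (c s) := by simp [hγdef]
      have hq2 : (c s + θ • (Pi.single 2 a : V3)) 2 = θ * a := by
        simp [hc2 s, Pi.single_apply]
      have hpd : |pd 2 ψ (c s + θ • (Pi.single 2 a : V3))| ≤ C33 := by
        apply hC33
        rw [hq2]
        exact mul_nonneg hθ.1.le hXs2
      have : ψ (c s) - ψ (X s) = -(γ' θ) := by
        rw [hslope, hγ1, hγ0]; ring
      rw [this, abs_neg, hγ'def]
      simp only
      rw [abs_mul, abs_of_nonneg hXs2]
      calc a * |pd 2 ψ _| ≤ a * C33 := mul_le_mul_of_nonneg_left hpd hXs2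
        _ = C33 * X s 2 := by rw [hadef]; ring
    -- Cauchy–Schwarz bound on the mixed term
    have hD : |V s 0 * pd 0 ψ (c s) + V s 1 * pd 1 ψ (c s)| ≤ nV s * Cmix := by
      refine le_trans (abs_cs2 _ _ _ _) ?_
      exact mul_le_mul_of_nonneg_left (hCmix (c s) (hc2 s)) (hnV0 s)
    -- assemble
    have habs : |β' s| ≤ 2 * |V s 2| * (C33 * X s 2) + 2 * (X s 2) * |V s 2| + 2 * (nV s * Cmix) * (X s 2) := by
      simp only [hβ'def]
      refine le_trans (abs_add_le _ _) (add_le_add (le_trans (abs_add_le _ _) (add_le_add ?_ ?_)) ?_)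
      · rw [abs_mul, abs_mul, abs_two]
        exact mul_le_mul_of_nonneg_left hMVT (by positivity)
      · rw [abs_mul, abs_mul, abs_two, abs_of_nonneg hXs2]
      · rw [abs_mul, abs_mul, abs_two, abs_of_nonneg hXs2]
        have := mul_le_mul_of_nonneg_right hD hXs2
        nlinarith [abs_nonneg (V s 0 * pd 0 ψ (c s) + V s 1 * pd 1 ψ (c s))]
    have hco := hcoerc s hs
    have hβpos := hβnonneg s hs
    have hsq : 2 * |V s 2| * (X s 2) ≤ (V s 2)^2 + (X s 2)^2 := by
      nlinarith [sq_nonneg (|V s 2| - X s 2), sq_abs (V s 2)]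
    have hA : 2 * |V s 2| * (C33 * X s 2) + 2 * (X s 2) * |V s 2| ≤ 2*(1+C33) * β s := by
      have h1 : (V s 2)^2 + (X s 2)^2 ≤ β s := by nlinarith
      nlinarith [mul_le_mul_of_nonneg_left hsq hC330]
    have hB : 2 * (nV s * Cmix) * (X s 2) ≤ (2*Cmix/g) * nV s * β s := by
      have hx3 : X s 2 ≤ β s / g := (le_div_iff₀ hg).2 (by nlinarith)
      have h2 : (2*Cmix/g) * nV s * β s = (2 * (nV s * Cmix)) * (β s / g) := by
        ring
      rw [h2]
      exact mul_le_mul_of_nonneg_left hx3 (by positivity)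
    calc |β' s| ≤ 2 * |V s 2| * (C33 * X s 2) + 2 * (X s 2) * |V s 2| + 2 * (nV s * Cmix) * (X s 2) := habs
      _ ≤ 2*(1+C33) * β s + (2*Cmix/g) * nV s * β s := add_le_add hA hB
      _ = fc s * β s := by simp only [hfcdef]; ring
  -- continuity data
  have hVca : ∀ s ∈ Set.Icc (-τ) (0:ℝ), ContinuousAt V s := fun s hs =>
    (hode s hs).2.1.continuousAt
  have hnVca : ∀ s ∈ Set.Icc (-τ) (0:ℝ), ContinuousAt nV s := by
    intro s hs
    have h0 : ContinuousAt (fun u => (V u 0)^2 + (V u 1)^2) s :=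
      ((((continuous_apply (0 : Fin 3)).continuousAt).comp (hVca s hs)).pow 2).add
        ((((continuous_apply (1 : Fin 3)).continuousAt).comp (hVca s hs)).pow 2)
    exact Real.continuous_sqrt.continuousAt.comp h0
  have hfca : ∀ s ∈ Set.Icc (-τ) (0:ℝ), ContinuousAt fc s := fun s hs =>
    continuousAt_const.add (continuousAt_const.mul (hnVca s hs))
  have hfcon : ContinuousOn fc (Set.Icc (-τ) 0) := fun s hs => (hfca s hs).continuousWithinAt
  have hicc : Set.uIcc (-τ) (0:ℝ) = Set.Icc (-τ) 0 := Set.uIcc_of_le (neg_nonpos.2 hτ)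
  have hfint : IntervalIntegrable fc volume (-τ) 0 := by
    apply ContinuousOn.intervalIntegrable; rw [hicc]; exact hfcon
  set F : ℝ → ℝ := fun u => ∫ s in (0:ℝ)..u, fc s with hFdef
  have hFcont : ContinuousOn F (Set.Icc (-τ) 0) := by
    have := intervalIntegral.continuousOn_primitive_interval' hfint
      (by rw [hicc]; exact ⟨neg_nonpos.2 hτ, le_rfl⟩)
    rwa [hicc] at this
  have hFd : ∀ s ∈ Set.Ioo (-τ) (0:ℝ), HasDerivAt F (fc s) s := by
    intro s hs
    have hint' : IntervalIntegrable fc volume 0 s := by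
      apply hfint.mono_set
      rw [hicc, Set.uIcc_of_ge hs.2.le]
      exact Set.Icc_subset_Icc hs.1.le le_rfl
    have hmeas : StronglyMeasurableAtFilter fc (nhds s) :=
      ⟨Set.Ioo (-τ) 0, Ioo_mem_nhds hs.1 hs.2,
        (hfcon.mono Set.Ioo_subset_Icc_self).aestronglyMeasurable measurableSet_Ioo⟩
    exact intervalIntegral.integral_hasDerivAt_right hint' hmeas
      (hfca s (Set.Ioo_subset_Icc_self hs))
  have hβcont : ContinuousOn β (Set.Icc (-τ) 0) := fun s hs =>
    (hβd s hs).continuousAt.continuousWithinAt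
  -- monotone and antitone auxiliary functions
  have hup : MonotoneOn (fun u => β u * Real.exp (F u)) (Set.Icc (-τ) 0) := by
    apply monotoneOn_of_deriv_nonneg (convex_Icc _ _)
    · exact hβcont.mul (Real.continuous_exp.comp_continuousOn hFcont)
    · rw [interior_Icc]
      intro s hs
      exact ((hβd s (Set.Ioo_subset_Icc_self hs)).mul
        ((hFd s hs).exp)).differentiableAt.differentiableWithinAt
    · rw [interior_Icc]
      intro s hs
      have hd := (hβd s (Set.Ioo_subset_Icc_self hs)).mul ((hFd s hs).exp)
      rw [show deriv (fun u => β u * Real.exp (F u)) s = _ from hd.deriv]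
      have hb := (abs_le.1 (hβ'bound s (Set.Ioo_subset_Icc_self hs))).1
      have hE := Real.exp_pos (F s)
      nlinarith [mul_nonneg hE.le (show (0:ℝ) ≤ β' s + fc s * β s by linarith)]
  have hdown : AntitoneOn (fun u => β u * Real.exp (-F u)) (Set.Icc (-τ) 0) := by
    apply antitoneOn_of_deriv_nonpos (convex_Icc _ _)
    · exact hβcont.mul (Real.continuous_exp.comp_continuousOn hFcont.neg)
    · rw [interior_Icc]
      intro s hs
      exact ((hβd s (Set.Ioo_subset_Icc_self hs)).mul
        (((hFd s hs).neg).exp)).differentiableAt.differentiableWithinAt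
    · rw [interior_Icc]
      intro s hs
      have hd := (hβd s (Set.Ioo_subset_Icc_self hs)).mul (((hFd s hs).neg).exp)
      rw [show deriv (fun u => β u * Real.exp (-F u)) s
        = β' s * Real.exp (-F s) + β s * (Real.exp (-F s) * -fc s) from hd.deriv]
      have hb := (abs_le.1 (hβ'bound s (Set.Ioo_subset_Icc_self hs))).2
      have hE := Real.exp_pos (-F s)
      nlinarith [mul_nonneg hE.le (show (0:ℝ) ≤ fc s * β s - β' s by linarith)]
  -- conclusion
  intro t ht
  obtain ⟨ht1, ht2⟩ := ht
  have htmem : t ∈ Set.Icc (-τ) (0:ℝ) := ⟨ht1, ht2⟩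
  have h0mem : (0:ℝ) ∈ Set.Icc (-τ) (0:ℝ) := ⟨neg_nonpos.2 hτ, le_rfl⟩
  have hF0 : F 0 = 0 := intervalIntegral.integral_same
  have hnVint : IntervalIntegrable nV volume t 0 := by
    apply ContinuousOn.intervalIntegrable
    rw [Set.uIcc_of_le ht2]
    exact fun s hs => (hnVca s (Set.Icc_subset_Icc ht1 le_rfl hs)).continuousWithinAt
  set I : ℝ := ∫ s in t..0, nV s with hIdef
  set A : ℝ := (1 + C33) * |t| + 1/g * Cmix * I with hAdef
  have hFt : -F t = 2 * A := by
    have h0 : -F t = ∫ s in t..0, fc s := by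
      rw [intervalIntegral.integral_symm, hFdef]
    have h1 : (∫ s in t..0, fc s)
        = (∫ _ in t..0, (2*(1+C33) : ℝ)) + ∫ s in t..0, (2*Cmix/g) * nV s :=
      intervalIntegral.integral_add intervalIntegrable_const (hnVint.const_mul _)
    have h2 : (∫ _ in t..0, (2*(1+C33) : ℝ)) = (0 - t) * (2*(1+C33)) := by
      rw [intervalIntegral.integral_const, smul_eq_mul]
    have h3 : (∫ s in t..0, (2*Cmix/g) * nV s) = (2*Cmix/g) * I := by
      rw [intervalIntegral.integral_const_mul, hIdef]
    have habs : |t| = 0 - t := by rw [abs_of_nonpos ht2]; ring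
    rw [h0, h1, h2, h3, hAdef, habs]
    ring
  have hβ00 : 0 ≤ β 0 := hβnonneg 0 h0mem
  have hup' : β t * Real.exp (F t) ≤ β 0 := by
    have := hup htmem h0mem ht2
    simpa [hF0] using this
  have hdn' : β 0 ≤ β t * Real.exp (-F t) := by
    have := hdown htmem h0mem ht2
    simpa [hF0] using this
  have hEt : Real.exp (-F t) = Real.exp (2*A) := by rw [hFt]
  have hupβ : β t ≤ β 0 * Real.exp (2*A) := by
    rw [← hEt, Real.exp_neg, ← div_eq_mul_inv]
    exact (le_div_iff₀ (Real.exp_pos _)).2 hup'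
  have hdnβ : β 0 * Real.exp (-(2*A)) ≤ β t := by
    have h2 : β 0 ≤ β t * Real.exp (2*A) := by rw [← hEt]; exact hdn'
    rw [Real.exp_neg, ← div_eq_mul_inv]
    exact (div_le_iff₀ (Real.exp_pos _)).2 h2
  have halpha0 : alphaK g Φ x v = Real.sqrt (β 0) := by
    have := halpha 0
    rwa [hX0, hV0] at this
  have hsqE : ∀ B : ℝ, Real.sqrt (Real.exp (2*B)) = Real.exp B := by
    intro B
    rw [show Real.exp (2*B) = (Real.exp B)^2 by rw [sq, ← Real.exp_add]; ring_nf]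
    exact Real.sqrt_sq (Real.exp_pos B).le
  constructor
  · rw [halpha t, halpha0]
    calc Real.sqrt (β t) ≤ Real.sqrt (β 0 * Real.exp (2*A)) := Real.sqrt_le_sqrt hupβ
      _ = Real.sqrt (β 0) * Real.exp A := by rw [Real.sqrt_mul hβ00, hsqE]
      _ = Real.sqrt (β 0) * Real.exp ((1 + C33) * |t|) * Real.exp (1/g * Cmix * I) := by
          rw [mul_assoc, ← Real.exp_add, hAdef]
  · rw [halpha t, halpha0]
    calc Real.sqrt (β 0) * Real.exp (-((1 + C33) * |t|)) * Real.exp (-(1/g * Cmix * I))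
        = Real.sqrt (β 0) * Real.exp (-A) := by
          rw [mul_assoc, ← Real.exp_add, hAdef]; ring_nf
      _ = Real.sqrt (β 0 * Real.exp (-(2*A))) := by
          rw [Real.sqrt_mul hβ00, show (-(2*A)) = 2*(-A) by ring, hsqE]
      _ ≤ Real.sqrt (β t) := Real.sqrt_le_sqrt hdnβ

end
end

section
/- Lemma (weighted integral with a logarithmically singular kernel). There exists a universal constant C > 0 such that for all β > 0, g > 0 and x₃ > 0: ∫_ℝ e^{−(β/2) v²} ( v² + x₃² + g x₃ )^{−1/2} dv ≤ C ( 1 + 1_{x₃ ≤ 1} |ln( x₃² + g x₃ )| + β^{−1/2} ). -/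
/-!
Statement 16: weighted velocity integral with a logarithmically singular kernel,
`∫ e^{−(β/2)v²} (v² + x₃² + g x₃)^{−1/2} dv ≤ C (1 + 1_{x₃≤1}|ln(x₃² + g x₃)| + β^{−1/2})`.
-/

open Real MeasureTheory

/-- **Weighted integral with a logarithmically singular kernel.** -/
theorem gaussian_log_singular_integral :
    ∃ C : ℝ, 0 < C ∧
      ∀ β g x₃ : ℝ, 0 < β → 0 < g → 0 < x₃ →
        ∫⁻ v : ℝ, ENNReal.ofReal
            (Real.exp (-(β / 2) * v ^ 2) * (Real.sqrt (v ^ 2 + x₃ ^ 2 + g * x₃))⁻¹)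
          ≤ ENNReal.ofReal
            (C * (1 + (if x₃ ≤ 1 then |Real.log (x₃ ^ 2 + g * x₃)| else 0)
              + (Real.sqrt β)⁻¹)) := by
  refine ⟨4, by norm_num, ?_⟩
  intro β g x₃ hβ hg hx
  simp only [add_assoc (_ ^ 2 : ℝ)]
  set a : ℝ := x₃ ^ 2 + g * x₃ with ha_def
  have ha : 0 < a := by positivity
  set f : ℝ → ENNReal := fun v =>
    ENNReal.ofReal (Real.exp (-(β / 2) * v ^ 2) * (Real.sqrt (v ^ 2 + a))⁻¹) with hf_def
  set ind : ℝ := if x₃ ≤ 1 then |Real.log a| else 0 with hind_def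
  have hind0 : 0 ≤ ind := by
    rw [hind_def]; split_ifs <;> positivity
  have hβs : 0 < Real.sqrt β := Real.sqrt_pos.2 hβ
  -- pointwise bound by the inverse-sqrt alone
  have hpt : ∀ v : ℝ, f v ≤ ENNReal.ofReal ((Real.sqrt (v ^ 2 + a))⁻¹) := by
    intro v
    apply ENNReal.ofReal_le_ofReal
    have h1 : Real.exp (-(β / 2) * v ^ 2) ≤ 1 := by
      rw [Real.exp_le_one_iff]; nlinarith [sq_nonneg v]
    have h2 : (0:ℝ) ≤ (Real.sqrt (v ^ 2 + a))⁻¹ := by positivity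
    calc Real.exp (-(β / 2) * v ^ 2) * (Real.sqrt (v ^ 2 + a))⁻¹
        ≤ 1 * (Real.sqrt (v ^ 2 + a))⁻¹ := by
          exact mul_le_mul_of_nonneg_right h1 h2
      _ = (Real.sqrt (v ^ 2 + a))⁻¹ := one_mul _
  -- tail bound
  have tail : ∫⁻ v in (Set.Icc (-1:ℝ) 1)ᶜ, f v ≤ ENNReal.ofReal (3 * (Real.sqrt β)⁻¹) := by
    have hb2 : 0 < β / 2 := by linarith
    have step1 : ∫⁻ v in (Set.Icc (-1:ℝ) 1)ᶜ, f v
        ≤ ∫⁻ v in (Set.Icc (-1:ℝ) 1)ᶜ, ENNReal.ofReal (Real.exp (-(β / 2) * v ^ 2)) := by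
      refine setLIntegral_mono (by fun_prop) ?_
      intro v hv
      simp only [Set.mem_compl_iff, Set.mem_Icc, not_and_or, not_le] at hv
      have hv2 : (1:ℝ) ≤ v ^ 2 := by rcases hv with h | h <;> nlinarith
      have hs1 : (1:ℝ) ≤ Real.sqrt (v ^ 2 + a) := by
        rw [show (1:ℝ) = Real.sqrt 1 by simp]
        exact Real.sqrt_le_sqrt (by linarith)
      apply ENNReal.ofReal_le_ofReal
      have : (Real.sqrt (v ^ 2 + a))⁻¹ ≤ 1 := by
        rw [inv_le_one_iff₀]; right; exact hs1
      calc Real.exp (-(β / 2) * v ^ 2) * (Real.sqrt (v ^ 2 + a))⁻¹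
          ≤ Real.exp (-(β / 2) * v ^ 2) * 1 :=
            mul_le_mul_of_nonneg_left this (Real.exp_pos _).le
        _ = Real.exp (-(β / 2) * v ^ 2) := mul_one _
    have step2 : ∫⁻ v, ENNReal.ofReal (Real.exp (-(β / 2) * v ^ 2))
        = ENNReal.ofReal (Real.sqrt (π / (β / 2))) := by
      rw [← ofReal_integral_eq_lintegral_ofReal (integrable_exp_neg_mul_sq hb2)
        (Filter.Eventually.of_forall fun v => (Real.exp_pos _).le)]
      rw [integral_gaussian]
    have step3 : Real.sqrt (π / (β / 2)) ≤ 3 * (Real.sqrt β)⁻¹ := by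
      have heq : Real.sqrt (π / (β / 2)) = Real.sqrt (2 * π) / Real.sqrt β := by
        rw [← Real.sqrt_div (by positivity)]
        congr 1
        field_simp
      have h2π : Real.sqrt (2 * π) ≤ 3 := by
        rw [show (3:ℝ) = Real.sqrt 9 by
          rw [show (9:ℝ) = 3 ^ 2 by norm_num, Real.sqrt_sq (by norm_num)]]
        exact Real.sqrt_le_sqrt (by nlinarith [Real.pi_le_four])
      rw [heq, div_eq_mul_inv]
      exact mul_le_mul_of_nonneg_right h2π (by positivity)
    calc ∫⁻ v in (Set.Icc (-1:ℝ) 1)ᶜ, f v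
        ≤ ∫⁻ v in (Set.Icc (-1:ℝ) 1)ᶜ, ENNReal.ofReal (Real.exp (-(β / 2) * v ^ 2)) := step1
      _ ≤ ∫⁻ v, ENNReal.ofReal (Real.exp (-(β / 2) * v ^ 2)) := setLIntegral_le_lintegral _ _
      _ = ENNReal.ofReal (Real.sqrt (π / (β / 2))) := step2
      _ ≤ ENNReal.ofReal (3 * (Real.sqrt β)⁻¹) := ENNReal.ofReal_le_ofReal step3
  -- middle bound
  have mid : ∫⁻ v in Set.Icc (-1:ℝ) 1, f v ≤ ENNReal.ofReal (2 + ind) := by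
    by_cases hA : 1 ≤ a
    · -- easy case: the inverse sqrt is at most 1
      calc ∫⁻ v in Set.Icc (-1:ℝ) 1, f v
          ≤ ∫⁻ _ in Set.Icc (-1:ℝ) 1, ENNReal.ofReal 1 := by
            refine setLIntegral_mono measurable_const ?_
            intro v _
            refine le_trans (hpt v) (ENNReal.ofReal_le_ofReal ?_)
            rw [inv_le_one_iff₀]; right
            rw [show (1:ℝ) = Real.sqrt 1 by simp]
            exact Real.sqrt_le_sqrt (by nlinarith [sq_nonneg v])
        _ = ENNReal.ofReal 1 * volume (Set.Icc (-1:ℝ) 1) := setLIntegral_const _ _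
        _ = ENNReal.ofReal 2 := by
            rw [Real.volume_Icc, ← ENNReal.ofReal_mul (by norm_num)]
            norm_num
        _ ≤ ENNReal.ofReal (2 + ind) := ENNReal.ofReal_le_ofReal (by linarith)
    · push_neg at hA
      set s : ℝ := Real.sqrt a with hs_def
      have hs : 0 < s := Real.sqrt_pos.2 ha
      have hs1 : s < 1 := by
        rw [hs_def, show (1:ℝ) = Real.sqrt 1 by simp]
        exact Real.sqrt_lt_sqrt ha.le hA
      have hx1 : x₃ ≤ 1 := by
        by_contra h
        push_neg at h
        have : 1 < a := by rw [ha_def]; nlinarith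
        linarith
      have hindeq : ind = |Real.log a| := by rw [hind_def, if_pos hx1]
      have hloga : Real.log a < 0 := Real.log_neg ha hA
      have habs : |Real.log a| = -Real.log a := abs_of_neg hloga
      -- the value of the two side integrals
      have hval : ∫ x in s..1, x⁻¹ = (1/2) * |Real.log a| := by
        rw [integral_inv_of_pos hs one_pos, habs]
        rw [show (1:ℝ) / s = s⁻¹ by ring, Real.log_inv, hs_def, Real.log_sqrt ha.le]
        ring
      -- bound on the inner interval
      have hinner : ∫⁻ v in Set.Icc (-s) s, f v ≤ ENNReal.ofReal 2 := by
        calc ∫⁻ v in Set.Icc (-s) s, f v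
            ≤ ∫⁻ _ in Set.Icc (-s) s, ENNReal.ofReal s⁻¹ := by
              refine setLIntegral_mono measurable_const ?_
              intro v _
              refine le_trans (hpt v) (ENNReal.ofReal_le_ofReal ?_)
              refine inv_anti₀ hs ?_
              rw [hs_def]
              exact Real.sqrt_le_sqrt (by nlinarith [sq_nonneg v])
          _ = ENNReal.ofReal s⁻¹ * volume (Set.Icc (-s) s) := setLIntegral_const _ _
          _ = ENNReal.ofReal (s⁻¹ * (s - -s)) := by
              rw [Real.volume_Icc, ← ENNReal.ofReal_mul (by positivity)]
          _ = ENNReal.ofReal 2 := by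
              congr 1
              field_simp
              ring
      -- bound on the right interval
      have hright : ∫⁻ v in Set.Icc s 1, f v ≤ ENNReal.ofReal ((1/2) * |Real.log a|) := by
        have hptv : ∀ v ∈ Set.Icc s 1, f v ≤ ENNReal.ofReal (v⁻¹) := by
          intro v hv
          refine le_trans (hpt v) (ENNReal.ofReal_le_ofReal ?_)
          refine inv_anti₀ (lt_of_lt_of_le hs hv.1) ?_
          calc v = Real.sqrt (v ^ 2) := by
                rw [Real.sqrt_sq (le_trans hs.le hv.1)]
            _ ≤ Real.sqrt (v ^ 2 + a) := Real.sqrt_le_sqrt (by linarith)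
        have hint : IntegrableOn (fun v : ℝ => v⁻¹) (Set.Icc s 1) := by
          refine ContinuousOn.integrableOn_Icc ?_
          exact ContinuousOn.inv₀ continuousOn_id
            (fun x hx => ne_of_gt (lt_of_lt_of_le hs hx.1))
        calc ∫⁻ v in Set.Icc s 1, f v
            ≤ ∫⁻ v in Set.Icc s 1, ENNReal.ofReal (v⁻¹) :=
              setLIntegral_mono (by fun_prop) hptv
          _ = ENNReal.ofReal (∫ v in Set.Icc s 1, v⁻¹) := by
              rw [ofReal_integral_eq_lintegral_ofReal hint]
              refine (ae_restrict_iff' measurableSet_Icc).2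
                (Filter.Eventually.of_forall fun v hv => ?_)
              have : 0 < v := lt_of_lt_of_le hs hv.1
              positivity
          _ = ENNReal.ofReal ((1/2) * |Real.log a|) := by
              rw [integral_Icc_eq_integral_Ioc,
                ← intervalIntegral.integral_of_le (le_of_lt hs1), hval]
      -- bound on the left interval
      have hleft : ∫⁻ v in Set.Icc (-1:ℝ) (-s), f v ≤ ENNReal.ofReal ((1/2) * |Real.log a|) := by
        have hptv : ∀ v ∈ Set.Icc (-1:ℝ) (-s), f v ≤ ENNReal.ofReal ((-v)⁻¹) := by
          intro v hv
          refine le_trans (hpt v) (ENNReal.ofReal_le_ofReal ?_)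
          have hvneg : s ≤ -v := by linarith [hv.2]
          refine inv_anti₀ (lt_of_lt_of_le hs hvneg) ?_
          calc -v = Real.sqrt ((-v) ^ 2) := by
                rw [Real.sqrt_sq (le_trans hs.le hvneg)]
            _ = Real.sqrt (v ^ 2) := by rw [neg_pow]; ring_nf
            _ ≤ Real.sqrt (v ^ 2 + a) := Real.sqrt_le_sqrt (by linarith)
        have hint : IntegrableOn (fun v : ℝ => (-v)⁻¹) (Set.Icc (-1:ℝ) (-s)) := by
          refine ContinuousOn.integrableOn_Icc ?_
          refine ContinuousOn.inv₀ (continuous_neg.continuousOn) ?_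
          intro x hx
          have : s ≤ -x := by linarith [hx.2]
          exact ne_of_gt (lt_of_lt_of_le hs this)
        have hvalL : ∫ v in (-1:ℝ)..(-s), (-v)⁻¹ = (1/2) * |Real.log a| := by
          rw [intervalIntegral.integral_comp_neg (fun x => x⁻¹)]
          simp only [neg_neg]
          exact hval
        calc ∫⁻ v in Set.Icc (-1:ℝ) (-s), f v
            ≤ ∫⁻ v in Set.Icc (-1:ℝ) (-s), ENNReal.ofReal ((-v)⁻¹) :=
              setLIntegral_mono (by fun_prop) hptv
          _ = ENNReal.ofReal (∫ v in Set.Icc (-1:ℝ) (-s), (-v)⁻¹) := by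
              rw [ofReal_integral_eq_lintegral_ofReal hint]
              refine (ae_restrict_iff' measurableSet_Icc).2
                (Filter.Eventually.of_forall fun v hv => ?_)
              have : s ≤ -v := by linarith [hv.2]
              have : 0 < -v := lt_of_lt_of_le hs this
              positivity
          _ = ENNReal.ofReal ((1/2) * |Real.log a|) := by
              rw [integral_Icc_eq_integral_Ioc,
                ← intervalIntegral.integral_of_le (by linarith : (-1:ℝ) ≤ -s), hvalL]
      -- combine
      have hsub : Set.Icc (-1:ℝ) 1 ⊆
          Set.Icc (-s) s ∪ (Set.Icc (-1:ℝ) (-s) ∪ Set.Icc s 1) := by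
        intro v hv
        simp only [Set.mem_Icc, Set.mem_union] at *
        rcases le_or_gt v s with h | h
        · rcases le_or_gt (-s) v with h' | h'
          · exact Or.inl ⟨h', h⟩
          · exact Or.inr (Or.inl ⟨hv.1, by linarith⟩)
        · exact Or.inr (Or.inr ⟨h.le, hv.2⟩)
      calc ∫⁻ v in Set.Icc (-1:ℝ) 1, f v
          ≤ ∫⁻ v in Set.Icc (-s) s ∪ (Set.Icc (-1:ℝ) (-s) ∪ Set.Icc s 1), f v :=
            lintegral_mono_set hsub
        _ ≤ (∫⁻ v in Set.Icc (-s) s, f v)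
              + ∫⁻ v in Set.Icc (-1:ℝ) (-s) ∪ Set.Icc s 1, f v := lintegral_union_le _ _ _
        _ ≤ (∫⁻ v in Set.Icc (-s) s, f v)
              + ((∫⁻ v in Set.Icc (-1:ℝ) (-s), f v) + ∫⁻ v in Set.Icc s 1, f v) :=
            add_le_add le_rfl (lintegral_union_le _ _ _)
        _ ≤ ENNReal.ofReal 2
              + (ENNReal.ofReal ((1/2) * |Real.log a|)
                + ENNReal.ofReal ((1/2) * |Real.log a|)) :=
            add_le_add hinner (add_le_add hleft hright)
        _ = ENNReal.ofReal (2 + ind) := by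
            rw [hindeq, ← ENNReal.ofReal_add (by positivity) (by positivity),
              ← ENNReal.ofReal_add (by norm_num) (by positivity)]
            ring_nf
  -- final combination
  calc ∫⁻ v, f v
      = (∫⁻ v in Set.Icc (-1:ℝ) 1, f v) + ∫⁻ v in (Set.Icc (-1:ℝ) 1)ᶜ, f v :=
        (lintegral_add_compl f measurableSet_Icc).symm
    _ ≤ ENNReal.ofReal (2 + ind) + ENNReal.ofReal (3 * (Real.sqrt β)⁻¹) := add_le_add mid tail
    _ = ENNReal.ofReal (2 + ind + 3 * (Real.sqrt β)⁻¹) := by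
        rw [← ENNReal.ofReal_add (by positivity) (by positivity)]
    _ ≤ ENNReal.ofReal (4 * (1 + ind + (Real.sqrt β)⁻¹)) := by
        refine ENNReal.ofReal_le_ofReal ?_
        have : (0:ℝ) ≤ (Real.sqrt β)⁻¹ := by positivity
        nlinarith
end

section
/- Lemma (exponential–logarithmic convolution estimate). There exists a universal constant C > 0 such that for all B > 0 and all x₃ ≥ 0: ∫_0^∞ e^{−B y} ln( 1 + 1/(2 (x₃ − y)²) ) dy ≤ C ( 1 + 1/B ). -/
/-!
Statement 18: exponential–logarithmic convolution estimate,
`∫₀^∞ e^{−By} ln(1 + 1/(2(x₃−y)²)) dy ≤ C (1 + 1/B)`.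
-/

open Real MeasureTheory

private lemma log_bound (t : ℝ) :
    Real.log (1 + 1 / (2 * t ^ 2)) ≤ 1 + 2 * max 0 (-Real.log |t|) := by
  have hmax : (0:ℝ) ≤ max 0 (-Real.log |t|) := le_max_left _ _
  rcases eq_or_ne t 0 with h | h
  · have h0 : Real.log (1 + 1 / (2 * t ^ 2)) = 0 := by
      rw [h]; norm_num
    rw [h0]; linarith
  · have ht2 : (0:ℝ) < t ^ 2 := by positivity
    rcases le_or_gt 1 |t| with h1 | h1
    · have ht1 : (1:ℝ) ≤ t ^ 2 := by
        nlinarith [sq_abs t]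
      have hlog : Real.log (1 + 1 / (2 * t ^ 2)) ≤ 1 / (2 * t ^ 2) := by
        have := Real.log_le_sub_one_of_pos (show (0:ℝ) < 1 + 1 / (2 * t ^ 2) by positivity)
        linarith
      have hfr : 1 / (2 * t ^ 2) ≤ 1 / 2 := by
        apply div_le_div_of_nonneg_left (by norm_num) (by norm_num) -- may need fix
        linarith
      linarith
    · have h0 : 0 < |t| := abs_pos.mpr h
      have ht1 : t ^ 2 ≤ 1 := by nlinarith [sq_abs t]
      have key : 1 + 1 / (2 * t ^ 2) ≤ 2 / t ^ 2 := by
        rw [le_div_iff₀ ht2]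
        have hexp : (1 + 1 / (2 * t ^ 2)) * t ^ 2 = t ^ 2 + 1 / 2 := by
          field_simp
        rw [hexp]; linarith
      have hlog : Real.log (1 + 1 / (2 * t ^ 2)) ≤ Real.log (2 / t ^ 2) :=
        Real.log_le_log (by positivity) key
      have h2 : Real.log (2 / t ^ 2) = Real.log 2 - 2 * Real.log |t| := by
        rw [Real.log_div (by norm_num) (ne_of_gt ht2), ← sq_abs t, Real.log_pow]
        push_cast
        ring
      have hlt : -Real.log |t| ≤ max 0 (-Real.log |t|) := le_max_right _ _
      have hlog2 : Real.log 2 ≤ 1 := by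
        have := Real.log_le_sub_one_of_pos (by norm_num : (0:ℝ) < 2)
        linarith
      linarith

private lemma F_meas :
    Measurable fun t : ℝ => ENNReal.ofReal (2 * max 0 (-Real.log |t|)) := by
  apply ENNReal.measurable_ofReal.comp
  exact (measurable_const.max ((Real.measurable_log.comp continuous_abs.measurable).neg)).const_mul 2

private lemma aux_half :
    ∫⁻ t in Set.Ioi (0:ℝ), ENNReal.ofReal (2 * max 0 (-Real.log t))
      ≤ ENNReal.ofReal 8 := by
  have hsplit : Set.Ioi (0:ℝ) = Set.Ioc 0 1 ∪ Set.Ioi 1 :=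
    (Set.Ioc_union_Ioi_eq_Ioi zero_le_one).symm
  rw [hsplit, lintegral_union measurableSet_Ioi (Set.Ioc_disjoint_Ioi le_rfl)]
  have h2 : ∫⁻ t in Set.Ioi (1:ℝ), ENNReal.ofReal (2 * max 0 (-Real.log t)) = 0 := by
    rw [setLIntegral_congr_fun_ae measurableSet_Ioi
      (ae_of_all _ (fun t (ht : t ∈ Set.Ioi (1:ℝ)) => ?_)), lintegral_zero]
    have : (0:ℝ) ≤ Real.log t := Real.log_nonneg (le_of_lt ht)
    have : max 0 (-Real.log t) = 0 := max_eq_left (by linarith)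
    simp [this]
  have h1 : ∫⁻ t in Set.Ioc (0:ℝ) 1, ENNReal.ofReal (2 * max 0 (-Real.log t))
      ≤ ENNReal.ofReal 8 := by
    have hr : (-1:ℝ) < -(1/2) := by norm_num
    have hbound : ∀ t ∈ Set.Ioc (0:ℝ) 1,
        ENNReal.ofReal (2 * max 0 (-Real.log t))
          ≤ ENNReal.ofReal (4 * t ^ (-(1/2) : ℝ)) := by
      intro t ht
      apply ENNReal.ofReal_le_ofReal
      have ht0 : 0 < t := ht.1
      have hrp : (0:ℝ) < t ^ (-(1/2) : ℝ) := Real.rpow_pos_of_pos ht0 _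
      have hl : Real.log (t ^ (-(1/2) : ℝ)) = -(1/2) * Real.log t :=
        Real.log_rpow ht0 _
      have hle : Real.log (t ^ (-(1/2) : ℝ)) ≤ t ^ (-(1/2) : ℝ) := by
        have := Real.log_le_sub_one_of_pos hrp
        linarith
      have hmax : max 0 (-Real.log t) ≤ 2 * t ^ (-(1/2) : ℝ) := by
        apply max_le (by positivity)
        nlinarith
      linarith
    calc ∫⁻ t in Set.Ioc (0:ℝ) 1, ENNReal.ofReal (2 * max 0 (-Real.log t))
        ≤ ∫⁻ t in Set.Ioc (0:ℝ) 1, ENNReal.ofReal (4 * t ^ (-(1/2) : ℝ)) := by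
          refine setLIntegral_mono ?_ hbound
          fun_prop
      _ = ENNReal.ofReal (∫ t in Set.Ioc (0:ℝ) 1, 4 * t ^ (-(1/2) : ℝ)) := by
          rw [← ofReal_integral_eq_lintegral_ofReal]
          · exact ((intervalIntegral.intervalIntegrable_rpow' hr).1).const_mul 4
          · filter_upwards [ae_restrict_mem measurableSet_Ioc] with t ht
            have : (0:ℝ) < t ^ (-(1/2) : ℝ) := Real.rpow_pos_of_pos ht.1 _
            positivity
      _ = ENNReal.ofReal 8 := by
          congr 1
          rw [← intervalIntegral.integral_of_le zero_le_one,
            intervalIntegral.integral_const_mul,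
            integral_rpow (Or.inl hr)]
          rw [Real.one_rpow, Real.zero_rpow (by norm_num : (-(1/2):ℝ) + 1 ≠ 0)]
          norm_num
  calc _ ≤ ENNReal.ofReal 8 + 0 := add_le_add h1 (le_of_eq h2)
    _ = ENNReal.ofReal 8 := by simp

private lemma aux_line :
    ∫⁻ t : ℝ, ENNReal.ofReal (2 * max 0 (-Real.log |t|))
      ≤ ENNReal.ofReal 16 := by
  have hIoi : ∫⁻ t in Set.Ioi (0:ℝ), ENNReal.ofReal (2 * max 0 (-Real.log |t|))
      ≤ ENNReal.ofReal 8 := by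
    rw [setLIntegral_congr_fun_ae measurableSet_Ioi
      (ae_of_all _ (fun t (ht : t ∈ Set.Ioi (0:ℝ)) => ?_))]
    · exact aux_half
    · rw [abs_of_pos ht]
  have hIic : ∫⁻ t in Set.Iic (0:ℝ), ENNReal.ofReal (2 * max 0 (-Real.log |t|))
      ≤ ENNReal.ofReal 8 := by
    have hpre : Neg.neg ⁻¹' (Set.Ici (0:ℝ)) = Set.Iic 0 := by
      ext x; simp [neg_nonneg]
    have hcomp := (Measure.measurePreserving_neg (volume : Measure ℝ)).setLIntegral_comp_preimage
      (s := Set.Ici (0:ℝ)) measurableSet_Ici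
      (f := fun t : ℝ => ENNReal.ofReal (2 * max 0 (-Real.log |t|))) F_meas
    have heq : ∀ a : ℝ, ENNReal.ofReal (2 * max 0 (-Real.log |(-a)|))
        = ENNReal.ofReal (2 * max 0 (-Real.log |a|)) := by
      intro a; rw [abs_neg]
    simp only [heq] at hcomp
    rw [hpre] at hcomp
    rw [hcomp, setLIntegral_congr (Ioi_ae_eq_Ici (a := (0:ℝ))).symm]
    exact hIoi
  calc ∫⁻ t : ℝ, ENNReal.ofReal (2 * max 0 (-Real.log |t|))
      = ∫⁻ t in Set.Iic (0:ℝ) ∪ Set.Ioi 0, ENNReal.ofReal (2 * max 0 (-Real.log |t|)) := by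
        rw [Set.Iic_union_Ioi, Measure.restrict_univ]
    _ = (∫⁻ t in Set.Iic (0:ℝ), ENNReal.ofReal (2 * max 0 (-Real.log |t|)))
        + ∫⁻ t in Set.Ioi (0:ℝ), ENNReal.ofReal (2 * max 0 (-Real.log |t|)) :=
        lintegral_union measurableSet_Ioi (Set.Iic_disjoint_Ioi le_rfl)
    _ ≤ ENNReal.ofReal 8 + ENNReal.ofReal 8 := add_le_add hIic hIoi
    _ = ENNReal.ofReal 16 := by
        rw [← ENNReal.ofReal_add (by norm_num) (by norm_num)]; norm_num

/-- **Exponential–logarithmic convolution estimate.** -/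
theorem exp_log_convolution :
    ∃ C : ℝ, 0 < C ∧
      ∀ B x₃ : ℝ, 0 < B → 0 ≤ x₃ →
        ∫⁻ y in Set.Ioi (0:ℝ), ENNReal.ofReal
            (Real.exp (-B * y) * Real.log (1 + 1 / (2 * (x₃ - y) ^ 2)))
          ≤ ENNReal.ofReal (C * (1 + 1 / B)) := by
  refine ⟨16, by norm_num, fun B x₃ hB _hx => ?_⟩
  have hBinv : (0:ℝ) < 1 / B := by positivity
  -- measurability of the majorant
  have hmeas : Measurable fun y : ℝ =>
      ENNReal.ofReal (Real.exp (-B * y)) + ENNReal.ofReal (2 * max 0 (-Real.log |x₃ - y|)) := by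
    refine Measurable.add (f := fun y : ℝ => ENNReal.ofReal (Real.exp (-B * y)))
      (g := fun y : ℝ => ENNReal.ofReal (2 * max 0 (-Real.log |x₃ - y|))) ?_ ?_
    · exact ENNReal.measurable_ofReal.comp (Real.measurable_exp.comp
        (measurable_const.mul measurable_id))
    · exact F_meas.comp (measurable_const.sub measurable_id)
  -- pointwise bound
  have hpt : ∀ y ∈ Set.Ioi (0:ℝ),
      ENNReal.ofReal (Real.exp (-B * y) * Real.log (1 + 1 / (2 * (x₃ - y) ^ 2)))
        ≤ ENNReal.ofReal (Real.exp (-B * y)) + ENNReal.ofReal (2 * max 0 (-Real.log |x₃ - y|)) := by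
    intro y hy
    have hy0 : 0 < y := hy
    have hmax : (0:ℝ) ≤ max 0 (-Real.log |x₃ - y|) := le_max_left _ _
    rw [← ENNReal.ofReal_add (Real.exp_nonneg _) (by linarith)]
    apply ENNReal.ofReal_le_ofReal
    have hq : (0:ℝ) ≤ 1 / (2 * (x₃ - y) ^ 2) := by positivity
    have hlog0 : (0:ℝ) ≤ Real.log (1 + 1 / (2 * (x₃ - y) ^ 2)) :=
      Real.log_nonneg (by linarith)
    have hlb := log_bound (x₃ - y)
    have he : Real.exp (-B * y) ≤ 1 := by
      apply Real.exp_le_one_iff.mpr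
      nlinarith
    have hep : (0:ℝ) < Real.exp (-B * y) := Real.exp_pos _
    nlinarith
  -- the exponential integral
  have hA : ∫⁻ y in Set.Ioi (0:ℝ), ENNReal.ofReal (Real.exp (-B * y))
      = ENNReal.ofReal (1 / B) := by
    rw [← ofReal_integral_eq_lintegral_ofReal (exp_neg_integrableOn_Ioi 0 hB)
      (Filter.Eventually.of_forall fun x => (Real.exp_pos _).le)]
    congr 1
    have h := integral_comp_mul_left_Ioi (fun u => Real.exp (-u)) 0 hB
    simp only [mul_zero, integral_exp_neg_Ioi_zero, smul_eq_mul, mul_one] at h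
    calc ∫ y in Set.Ioi (0:ℝ), Real.exp (-B * y)
        = ∫ y in Set.Ioi (0:ℝ), Real.exp (-(B * y)) := by simp [neg_mul]
      _ = B⁻¹ := h
      _ = 1 / B := (one_div B).symm
  -- the log integral
  have hBt : ∫⁻ y in Set.Ioi (0:ℝ), ENNReal.ofReal (2 * max 0 (-Real.log |x₃ - y|))
      ≤ ENNReal.ofReal 16 := by
    calc ∫⁻ y in Set.Ioi (0:ℝ), ENNReal.ofReal (2 * max 0 (-Real.log |x₃ - y|))
        ≤ ∫⁻ y : ℝ, ENNReal.ofReal (2 * max 0 (-Real.log |x₃ - y|)) :=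
          setLIntegral_le_lintegral _ _
      _ = ∫⁻ t : ℝ, ENNReal.ofReal (2 * max 0 (-Real.log |t|)) :=
          (Measure.measurePreserving_sub_left (volume : Measure ℝ) x₃).lintegral_comp F_meas
      _ ≤ ENNReal.ofReal 16 := aux_line
  calc ∫⁻ y in Set.Ioi (0:ℝ), ENNReal.ofReal
          (Real.exp (-B * y) * Real.log (1 + 1 / (2 * (x₃ - y) ^ 2)))
      ≤ ∫⁻ y in Set.Ioi (0:ℝ),
          (ENNReal.ofReal (Real.exp (-B * y)) + ENNReal.ofReal (2 * max 0 (-Real.log |x₃ - y|))) :=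
        setLIntegral_mono hmeas hpt
    _ = (∫⁻ y in Set.Ioi (0:ℝ), ENNReal.ofReal (Real.exp (-B * y)))
        + ∫⁻ y in Set.Ioi (0:ℝ), ENNReal.ofReal (2 * max 0 (-Real.log |x₃ - y|)) :=
        lintegral_add_left (ENNReal.measurable_ofReal.comp (Real.measurable_exp.comp
          (measurable_const.mul measurable_id))) _
    _ ≤ ENNReal.ofReal (1 / B) + ENNReal.ofReal 16 := by
        rw [hA]; exact add_le_add le_rfl hBt
    _ ≤ ENNReal.ofReal (16 * (1 + 1 / B)) := by
        rw [← ENNReal.ofReal_add hBinv.le (by norm_num)]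
        apply ENNReal.ofReal_le_ofReal
        nlinarith
end
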